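/- Let A be an n×n real positive semidefinite matrix and y ∈ ℝⁿ a vector orthogonal to the kernel of A. Then yᵀA†y = inf{λ² : λ > 0 and |yᵀu|² ≤ λ²·(uᵀAu) for all u ∈ ℝⁿ}, where A† is the Moore–Penrose pseudoinverse of A. -/

import Mathlib

open Matrix

/-- `B` satisfies the four Penrose conditions for being the
Moore–Penrose pseudoinverse of `A`. -/
def IsMoorePenroseInv {n : ℕ} (A B : Matrix (Fin n) (Fin n) ℝ) : Prop :=
  A * B * A = A ∧ B * A * B = B ∧ (A * B)ᵀ = A * B ∧ (B * A)ᵀ = B * A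

lemma mp_unique {n : ℕ} (A B C : Matrix (Fin n) (Fin n) ℝ)
    (hB : IsMoorePenroseInv A B) (hC : IsMoorePenroseInv A C) : B = C := by
  obtain ⟨hB1, hB2, hB3, hB4⟩ := hB
  obtain ⟨hC1, hC2, hC3, hC4⟩ := hC
  have hAB : A * B = A * C := by
    calc A * B = (A * C * A) * B := by rw [hC1]
    _ = (A * C) * (A * B) := by rw [mul_assoc]
    _ = (A * C)ᵀ * (A * B)ᵀ := by rw [hC3, hB3]
    _ = Cᵀ * ((A * B * A)ᵀ) := by
        simp only [transpose_mul, mul_assoc]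
    _ = Cᵀ * Aᵀ := by rw [hB1]
    _ = (A * C)ᵀ := by rw [transpose_mul]
    _ = A * C := hC3
  have hBA : B * A = C * A := by
    calc B * A = B * (A * C * A) := by rw [hC1]
    _ = (B * A) * (C * A) := by rw [mul_assoc, mul_assoc]
    _ = (B * A)ᵀ * (C * A)ᵀ := by rw [hB4, hC4]
    _ = (A * B * A)ᵀ * Cᵀ := by
        simp only [transpose_mul, mul_assoc]
    _ = Aᵀ * Cᵀ := by rw [hB1]
    _ = (C * A)ᵀ := by rw [transpose_mul]
    _ = C * A := hC4
  calc B = B * A * B := hB2.symm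
  _ = (C * A) * B := by rw [hBA]
  _ = C * (A * B) := by rw [mul_assoc]
  _ = C * (A * C) := by rw [hAB]
  _ = C * A * C := by rw [mul_assoc]
  _ = C := hC2

lemma cs_psd {n : ℕ} (A : Matrix (Fin n) (Fin n) ℝ) (hA : A.PosSemidef)
    (x u : Fin n → ℝ) :
    (x ⬝ᵥ A.mulVec u) ^ 2 ≤ (x ⬝ᵥ A.mulVec x) * (u ⬝ᵥ A.mulVec u) := by
  have hAt : Aᵀ = A := hA.1
  have hsym : ∀ v w : Fin n → ℝ, v ⬝ᵥ A.mulVec w = w ⬝ᵥ A.mulVec v := by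
    intro v w
    rw [Matrix.dotProduct_mulVec, ← Matrix.mulVec_transpose, hAt, dotProduct_comm]
  have hpos : ∀ t : ℝ, 0 ≤ (u ⬝ᵥ A.mulVec u) * (t * t) + (2 * (x ⬝ᵥ A.mulVec u)) * t
      + (x ⬝ᵥ A.mulVec x) := by
    intro t
    have h0 := hA.dotProduct_mulVec_nonneg (x + t • u)
    simp only [star_trivial] at h0
    have hexp : (x + t • u) ⬝ᵥ A.mulVec (x + t • u)
        = (u ⬝ᵥ A.mulVec u) * (t * t) + (2 * (x ⬝ᵥ A.mulVec u)) * t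
          + (x ⬝ᵥ A.mulVec x) := by
      simp only [Matrix.mulVec_add, Matrix.mulVec_smul, dotProduct_add,
        add_dotProduct, dotProduct_smul, smul_dotProduct, smul_eq_mul]
      rw [hsym u x]
      ring
    linarith [hexp ▸ h0]
  have hd := discrim_le_zero hpos
  rw [discrim] at hd
  nlinarith [hd]

theorem stmt_0 {n : ℕ} (A B : Matrix (Fin n) (Fin n) ℝ)
    (hA : A.PosSemidef) (hB : IsMoorePenroseInv A B)
    (y : Fin n → ℝ) (hy : ∀ v : Fin n → ℝ, A.mulVec v = 0 → y ⬝ᵥ v = 0) :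
    y ⬝ᵥ B.mulVec y =
      sInf {t : ℝ | ∃ lam : ℝ, 0 < lam ∧ t = lam ^ 2 ∧
        ∀ u : Fin n → ℝ, (y ⬝ᵥ u) ^ 2 ≤ lam ^ 2 * (u ⬝ᵥ A.mulVec u)} := by
  obtain ⟨hB1, hB2, hB3, hB4⟩ := hB
  have hAt : Aᵀ = A := hA.1
  -- B is symmetric
  have hBt : Bᵀ = B := by
    apply mp_unique A Bᵀ B _ ⟨hB1, hB2, hB3, hB4⟩
    refine ⟨?_, ?_, ?_, ?_⟩
    · calc A * Bᵀ * A = Aᵀ * Bᵀ * Aᵀ := by rw [hAt]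
      _ = (A * (B * A))ᵀ := by simp only [transpose_mul, mul_assoc]
      _ = (A * B * A)ᵀ := by rw [mul_assoc]
      _ = Aᵀ := by rw [hB1]
      _ = A := hAt
    · calc Bᵀ * A * Bᵀ = Bᵀ * Aᵀ * Bᵀ := by rw [hAt]
      _ = (B * (A * B))ᵀ := by simp only [transpose_mul, mul_assoc]
      _ = (B * A * B)ᵀ := by rw [mul_assoc]
      _ = Bᵀ := by rw [hB2]
    · calc (A * Bᵀ)ᵀ = (Aᵀ * Bᵀ)ᵀ := by rw [hAt]
      _ = ((B * A)ᵀ)ᵀ := by rw [transpose_mul B A]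
      _ = B * A := transpose_transpose _
      _ = (B * A)ᵀ := hB4.symm
      _ = Aᵀ * Bᵀ := by rw [transpose_mul]
      _ = A * Bᵀ := by rw [hAt]
    · calc (Bᵀ * A)ᵀ = (Bᵀ * Aᵀ)ᵀ := by rw [hAt]
      _ = ((A * B)ᵀ)ᵀ := by rw [transpose_mul A B]
      _ = A * B := transpose_transpose _
      _ = (A * B)ᵀ := hB3.symm
      _ = Bᵀ * Aᵀ := by rw [transpose_mul]
      _ = Bᵀ * A := by rw [hAt]
  -- y = B A y
  have hyBA : (B * A).mulVec y = y := by
    set v : Fin n → ℝ := y - (B * A).mulVec y with hv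
    have hAv : A.mulVec v = 0 := by
      rw [hv, Matrix.mulVec_sub, Matrix.mulVec_mulVec, ← mul_assoc, hB1, sub_self]
    have h1 : y ⬝ᵥ v = 0 := hy v hAv
    have h2 : (B * A).mulVec y ⬝ᵥ v = 0 := by
      have hBABA : B * A * (B * A) = B * A := by rw [← mul_assoc, hB2]
      have : (B * A).mulVec v = 0 := by
        rw [hv, Matrix.mulVec_sub, Matrix.mulVec_mulVec, hBABA, sub_self]
      calc (B * A).mulVec y ⬝ᵥ v = y ⬝ᵥ (B * A)ᵀ.mulVec v := by
            rw [Matrix.dotProduct_mulVec, ← Matrix.mulVec_transpose, transpose_transpose]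
      _ = y ⬝ᵥ (B * A).mulVec v := by rw [hB4]
      _ = 0 := by rw [this, dotProduct_zero]
    have hvv : v ⬝ᵥ v = 0 := by
      have : v ⬝ᵥ v = y ⬝ᵥ v - (B * A).mulVec y ⬝ᵥ v := by
        rw [hv, sub_dotProduct]
      rw [this, h1, h2, sub_zero]
    have hv0 : v = 0 := by
      have := (dotProduct_self_eq_zero (v := v)).mp hvv
      exact this
    have h3 : y - (B * A).mulVec y = 0 := hv0
    rw [sub_eq_zero] at h3
    exact h3.symm
  -- A B = B A
  have hABBA : A * B = B * A := by
    calc A * B = (A * B)ᵀ := hB3.symm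
    _ = Bᵀ * Aᵀ := transpose_mul _ _
    _ = B * A := by rw [hBt, hAt]
  set x := B.mulVec y with hx
  have hAx : A.mulVec x = y := by
    rw [hx, Matrix.mulVec_mulVec, hABBA, hyBA]
  set c := y ⬝ᵥ B.mulVec y with hc
  have hyx : y ⬝ᵥ x = c := hc.symm
  have hcx : x ⬝ᵥ A.mulVec x = c := by
    rw [hAx, dotProduct_comm, hyx]
  have hc0 : 0 ≤ c := by
    rw [← hcx]
    simpa using hA.dotProduct_mulVec_nonneg x
  have hCS : ∀ u : Fin n → ℝ, (y ⬝ᵥ u) ^ 2 ≤ c * (u ⬝ᵥ A.mulVec u) := by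
    intro u
    have h1 : x ⬝ᵥ A.mulVec u = y ⬝ᵥ u := by
      rw [Matrix.dotProduct_mulVec, ← Matrix.mulVec_transpose, hAt, hAx]
    calc (y ⬝ᵥ u) ^ 2 = (x ⬝ᵥ A.mulVec u) ^ 2 := by rw [h1]
    _ ≤ (x ⬝ᵥ A.mulVec x) * (u ⬝ᵥ A.mulVec u) := cs_psd A hA x u
    _ = c * (u ⬝ᵥ A.mulVec u) := by rw [hcx]
  set S := {t : ℝ | ∃ lam : ℝ, 0 < lam ∧ t = lam ^ 2 ∧
      ∀ u : Fin n → ℝ, (y ⬝ᵥ u) ^ 2 ≤ lam ^ 2 * (u ⬝ᵥ A.mulVec u)} with hS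
  have hbdd : BddBelow S := by
    refine ⟨0, fun t ht => ?_⟩
    obtain ⟨lam, hlam, rfl, _⟩ := ht
    positivity
  have hlb : ∀ t ∈ S, c ≤ t := by
    intro t ht
    obtain ⟨lam, hlam, rfl, hcond⟩ := ht
    have h2 := hcond x
    rw [hyx, hcx] at h2
    rcases eq_or_lt_of_le hc0 with h | h
    · nlinarith
    · nlinarith
  rcases eq_or_lt_of_le hc0 with h | h
  · -- c = 0 : then y ⬝ᵥ u = 0 for all u
    have hy0 : ∀ u : Fin n → ℝ, (y ⬝ᵥ u) ^ 2 ≤ 0 := by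
      intro u
      have := hCS u
      rw [← h, zero_mul] at this
      exact this
    have hmem : ∀ ε : ℝ, 0 < ε → ε ∈ S := by
      intro ε hε
      refine ⟨Real.sqrt ε, Real.sqrt_pos.mpr hε, (Real.sq_sqrt hε.le).symm, fun u => ?_⟩
      have h4 : 0 ≤ u ⬝ᵥ A.mulVec u := by simpa using hA.dotProduct_mulVec_nonneg u
      have h5 := hy0 u
      nlinarith [Real.sq_sqrt hε.le, Real.sqrt_pos.mpr hε]
    rw [← h]
    refine le_antisymm
      (le_csInf ⟨1, hmem 1 one_pos⟩ (fun t ht => le_trans (le_of_eq h) (hlb t ht))) ?_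
    have h6 : ∀ ε : ℝ, 0 < ε → sInf S ≤ 0 + ε := fun ε hε => by
      simpa using csInf_le hbdd (hmem ε hε)
    exact le_of_forall_pos_le_add h6
  · -- c > 0
    have hmem : c ∈ S := by
      refine ⟨Real.sqrt c, Real.sqrt_pos.mpr h, (Real.sq_sqrt hc0).symm, fun u => ?_⟩
      rw [Real.sq_sqrt hc0]
      exact hCS u
    exact le_antisymm (le_csInf ⟨c, hmem⟩ hlb) (csInf_le hbdd hmem)
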